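/- Let X be a symmetric subset of a real vector space (i.e., x ∈ X implies −x ∈ X), Y a real inner product space, I : X → ℝ even, Φ : X → Y odd, and μ > 0. Suppose u ∈ X is a global minimum of x ↦ I(x) + μ‖Φ(x)‖² and that I(u) ≤ I(x) + 2μ(⟨Φ(x), Φ(u)⟩ − ‖Φ(u)‖²) for all x ∈ X. Then Φ(u) = 0 and u is a global minimum of I on X. -/

import Mathlib

theorem stmt_2 {V Y : Type*} [AddCommGroup V] [Module ℝ V]
    [NormedAddCommGroup Y] [InnerProductSpace ℝ Y]
    (X : Set V) (hXne : X.Nonempty) (hXsym : ∀ x ∈ X, -x ∈ X)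
    (I : V → ℝ) (Φ : V → Y)
    (hIeven : ∀ x ∈ X, I (-x) = I x) (hΦodd : ∀ x ∈ X, Φ (-x) = -Φ x)
    (μ : ℝ) (hμ : 0 < μ) (u : V) (huX : u ∈ X)
    (hu : ∀ x ∈ X, I u + μ * ‖Φ u‖ ^ 2 ≤ I x + μ * ‖Φ x‖ ^ 2)
    (hineq : ∀ x ∈ X, I u ≤ I x + 2 * μ * ((inner ℝ (Φ x) (Φ u) : ℝ) - ‖Φ u‖ ^ 2)) :
    Φ u = 0 ∧ ∀ x ∈ X, I u ≤ I x := by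
  have h1 := hineq (-u) (hXsym u huX)
  rw [hIeven u huX, hΦodd u huX, inner_neg_left, real_inner_self_eq_norm_sq] at h1
  have hΦ0 : ‖Φ u‖ ^ 2 = 0 := by nlinarith [sq_nonneg ‖Φ u‖]
  have hΦ : Φ u = 0 := by
    have := pow_eq_zero_iff (n := 2) (by norm_num) |>.mp hΦ0
    simpa using this
  refine ⟨hΦ, fun x hx => ?_⟩
  have := hineq x hx
  rw [hΦ] at this
  simpa using this
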